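/- Let σ₀, σ₁, s > 0, ρ̃, ρ̂ ∈ [-1,1], and μ₀, μ₁, ν ∈ ℝ. Define (s')² = σ₀²·(1 - ρ̃²·(1 - σ₁²/s²)) (so that s' > 0), ν' = μ₀ - (σ₀/s)·ρ̃·(ν - μ₁), and ν'' = μ₁ - (σ₁/s')·ρ̂·(ν' - μ₀). Then |ν'' - μ₁| ≤ |ρ̂| · |ν - μ₁|. -/

import Mathlib

/-- Mean updates of the two IPF projection steps inside one IPMF step.
With `(s')² = σ₀²(1 - ρ̃²(1 - σ₁²/s²))` (and `s' > 0`), `ν' = μ₀ - (σ₀/s)ρ̃(ν - μ₁)` and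
`ν'' = μ₁ - (σ₁/s')ρ̂(ν' - μ₀)`, one has `|ν'' - μ₁| ≤ |ρ̂|·|ν - μ₁|`. -/
theorem IPF_mean_update (σ₀ σ₁ s s' ρt ρh μ₀ μ₁ ν ν' ν'' : ℝ)
    (hσ₀ : 0 < σ₀) (hσ₁ : 0 < σ₁) (hs : 0 < s)
    (hρt : ρt ∈ Set.Icc (-1 : ℝ) 1) (hρh : ρh ∈ Set.Icc (-1 : ℝ) 1)
    (hs' : 0 < s')
    (hs'2 : s' ^ 2 = σ₀ ^ 2 * (1 - ρt ^ 2 * (1 - σ₁ ^ 2 / s ^ 2)))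
    (hν' : ν' = μ₀ - (σ₀ / s) * ρt * (ν - μ₁))
    (hν'' : ν'' = μ₁ - (σ₁ / s') * ρh * (ν' - μ₀)) :
    |ν'' - μ₁| ≤ |ρh| * |ν - μ₁| := by
  subst hν' hν''
  have e : μ₁ - σ₁ / s' * ρh * (μ₀ - σ₀ / s * ρt * (ν - μ₁) - μ₀) - μ₁
      = (σ₁ * σ₀ * ρt / (s' * s)) * (ρh * (ν - μ₁)) := by
    field_simp
    ring
  rw [e, abs_mul, abs_mul]
  have hx : (0:ℝ) ≤ |ρh| * |ν - μ₁| := by positivity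
  refine mul_le_of_le_one_left hx ?_
  have hρt2 : ρt ^ 2 ≤ 1 := by
    have h1 := hρt.1; have h2 := hρt.2; nlinarith
  have key : σ₁ * σ₀ * |ρt| ≤ s' * s := by
    have hsq : (σ₁ * σ₀ * |ρt|) ^ 2 ≤ (s' * s) ^ 2 := by
      have habs : |ρt| ^ 2 = ρt ^ 2 := sq_abs ρt
      have hs2 : s ^ 2 ≠ 0 := by positivity
      have hss : s' ^ 2 * s ^ 2 = σ₀ ^ 2 * (s ^ 2 * (1 - ρt ^ 2) + ρt ^ 2 * σ₁ ^ 2) := by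
        rw [hs'2]
        field_simp
        ring
      have h1 : (σ₁ * σ₀ * |ρt|) ^ 2 = σ₁ ^ 2 * σ₀ ^ 2 * ρt ^ 2 := by
        rw [mul_pow, mul_pow, sq_abs]
      rw [h1, mul_pow, hss]
      nlinarith [mul_nonneg (mul_nonneg (sq_nonneg σ₀) (sq_nonneg s)) (sub_nonneg.mpr hρt2)]
    nlinarith [mul_pos hs' hs, mul_nonneg (mul_nonneg hσ₁.le hσ₀.le) (abs_nonneg ρt)]
  rw [abs_div, abs_mul, abs_mul, abs_of_pos hσ₁, abs_of_pos hσ₀,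
    abs_of_pos (mul_pos hs' hs)]
  rw [div_le_one (mul_pos hs' hs)]
  exact key
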